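/- Let m = 2^M with M ≥ 3, and define the sequence w₀ = m + p for some p ∈ {0, 2, 4} chosen so that w₀ ≡ 1 (mod 3), and w_{t} = s + 3 whenever w_{t−1} = 3s + 1 (before each step, w_{t−1} is adjusted by adding an even number in {0,2,4} to make it ≡ 1 mod 3). Then every term of the sequence is even, and the sequence reaches a value at most 8 after at most ⌈log₃(2^{M+1} − 7)⌉ steps. -/
import Mathlib


/-- The repeated snake-embedding width reduction: starting from width `2^M` (`M ≥ 3`),
at each step pad by an even `p ∈ {0,2,4}` to reach the form `3s+1` and fold to width
`s+3`. Then every width in the sequence is even, and the width drops to at most `8`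
within `⌈log₃(2^(M+1) − 7)⌉` steps. -/
theorem stmt_18 (M : ℕ) (hM : 3 ≤ M) (w : ℕ → ℕ) (h0 : w 0 = 2 ^ M)
    (hstep : ∀ t : ℕ, ∃ p ∈ ({0, 2, 4} : Finset ℕ), ∃ s : ℕ, 1 ≤ s ∧
      w t + p = 3 * s + 1 ∧ w (t + 1) = s + 3) :
    (∀ t, Even (w t)) ∧
      ∃ t ≤ ⌈Real.logb 3 ((2 : ℝ) ^ (M + 1) - 7)⌉₊, w t ≤ 8 := by
  -- evenness
  have heven : ∀ t, w t % 2 = 0 := by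
    intro t
    induction t with
    | zero =>
      rw [h0]
      have h1 : M = (M - 1) + 1 := by omega
      rw [h1, pow_succ]
      omega
    | succ t ih =>
      obtain ⟨p, hp, s, hs1, hs2, hs3⟩ := hstep t
      simp [Finset.mem_insert] at hp
      omega
  -- one-step quantitative bound
  have hdec : ∀ t, 3 * w (t + 1) ≤ w t + 12 := by
    intro t
    obtain ⟨p, hp, s, hs1, hs2, hs3⟩ := hstep t
    simp [Finset.mem_insert] at hp
    omega
  -- key invariant
  have hkey : ∀ t, 3 ^ t * (2 * w t) + 12 ≤ 2 ^ (M + 1) + 12 * 3 ^ t := by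
    intro t
    induction t with
    | zero => simp [h0]; ring_nf; omega
    | succ t ih =>
      have h1 := hdec t
      have h2 : 3 ^ (t + 1) * (2 * w (t + 1)) = 3 ^ t * (2 * (3 * w (t + 1))) := by ring
      calc 3 ^ (t + 1) * (2 * w (t + 1)) + 12
          = 3 ^ t * (2 * (3 * w (t + 1))) + 12 := by rw [h2]
        _ ≤ 3 ^ t * (2 * (w t + 12)) + 12 := by
            have := Nat.mul_le_mul_left (3 ^ t) (Nat.mul_le_mul_left 2 h1)
            omega
        _ = (3 ^ t * (2 * w t) + 12) + 24 * 3 ^ t := by ring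
        _ ≤ (2 ^ (M + 1) + 12 * 3 ^ t) + 24 * 3 ^ t := by omega
        _ = 2 ^ (M + 1) + 12 * 3 ^ (t + 1) := by ring
  refine ⟨fun t => Nat.even_iff.2 (heven t), ?_⟩
  set N := ⌈Real.logb 3 ((2 : ℝ) ^ (M + 1) - 7)⌉₊ with hN
  refine ⟨N, le_refl _, ?_⟩
  -- 3^N ≥ 2^(M+1) - 7 over the reals, hence over ℕ
  have hx : (1 : ℝ) < (2 : ℝ) ^ (M + 1) - 7 := by
    have : (2 : ℝ) ^ 4 ≤ (2 : ℝ) ^ (M + 1) :=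
      pow_le_pow_right₀ (by norm_num) (by omega)
    norm_num at this ⊢; linarith
  have hlog : Real.logb 3 ((2 : ℝ) ^ (M + 1) - 7) ≤ (N : ℝ) := Nat.le_ceil _
  have hpow : (2 : ℝ) ^ (M + 1) - 7 ≤ (3 : ℝ) ^ N := by
    have h3 : (1 : ℝ) < 3 := by norm_num
    calc (2 : ℝ) ^ (M + 1) - 7
        = (3 : ℝ) ^ Real.logb 3 ((2 : ℝ) ^ (M + 1) - 7) := by
          rw [Real.rpow_logb (by norm_num) (by norm_num) (by linarith)]
      _ ≤ (3 : ℝ) ^ (N : ℝ) := by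
          exact Real.rpow_le_rpow_of_exponent_le (by norm_num) hlog
      _ = (3 : ℝ) ^ N := by rw [Real.rpow_natCast]
  have hnat : 2 ^ (M + 1) ≤ 3 ^ N + 7 := by
    have : ((2 : ℕ) ^ (M + 1) : ℝ) ≤ ((3 : ℕ) ^ N + 7 : ℕ) := by push_cast; linarith
    exact_mod_cast this
  have hK := hkey N
  have hP : 1 ≤ 3 ^ N := Nat.one_le_pow _ _ (by norm_num)
  by_contra hc
  push_neg at hc
  have h9 : 9 ≤ w N := hc
  have : 3 ^ N * 18 ≤ 3 ^ N * (2 * w N) := Nat.mul_le_mul_left _ (by omega)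
  omega
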